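/- Let n ≥ 1 and let A ∈ M_n(ℂ) be upper triangular with Tr(A) a nonnegative real number, and let S ∈ M_n(ℂ) be Hermitian and upper triangular (hence diagonal with real entries) with Re(A) ≤ S. Let (A_m)_{m≥1} be a sequence of strictly upper triangular matrices in M_n(ℂ) with ‖A_m‖ ≤ 1 for every m. Set α_0 = Tr(A) and α_m = Tr(A A_m*) for m ≥ 1. Then for every real r with 0 ≤ r ≤ 1/3, the series ∑_{m=0}^∞ |α_m| r^m converges and ∑_{m=0}^∞ |α_m| r^m ≤ Tr(S). -/

import Mathlib

open Matrix
open scoped Matrix.Norms.L2Operator ComplexOrder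

lemma trace_re_nonneg_of_psd {n : ℕ} {P : Matrix (Fin n) (Fin n) ℂ} (hP : P.PosSemidef) :
    0 ≤ P.trace.re := by
  rw [Matrix.trace, Complex.re_sum]
  refine Finset.sum_nonneg fun i _ => ?_
  have := hP.re_dotProduct_nonneg (Pi.single i 1)
  simpa [dotProduct, Matrix.mulVec, Pi.single_apply, Matrix.diag] using this

lemma trace_psd_mul_le {n : ℕ} {P X : Matrix (Fin n) (Fin n) ℂ} (hP : P.PosSemidef) :
    ‖(P * X).trace‖ ≤ ‖X‖ * P.trace.re := by
  obtain ⟨C, rfl⟩ : ∃ C : Matrix (Fin n) (Fin n) ℂ, P = Cᴴ * C := by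
    open scoped MatrixOrder in
    have h0 : (0 : Matrix (Fin n) (Fin n) ℂ) ≤ P := Matrix.nonneg_iff_posSemidef.mpr hP
    open scoped MatrixOrder in
    obtain ⟨X, hX, -, hXP⟩ := CFC.exists_sqrt_of_isSelfAdjoint_of_quasispectrumRestricts
      hP.isHermitian (QuasispectrumRestricts.nnreal_of_nonneg h0)
    exact ⟨X, by rw [← hXP, ← Matrix.star_eq_conjTranspose, hX.star_eq]⟩
  rw [Matrix.mul_assoc, Matrix.trace_mul_comm]
  set u : Fin n → EuclideanSpace ℂ (Fin n) := fun i => WithLp.toLp 2 (fun k => (starRingEnd ℂ) (C i k)) with hu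
  have hdiag : ∀ i, (C * X * Cᴴ) i i = star (u i) ⬝ᵥ X *ᵥ (u i) := by
    intro i
    simp only [Matrix.mul_apply, dotProduct, Matrix.mulVec, Matrix.conjTranspose_apply,
      dotProduct, hu, Pi.star_apply, star_apply]
    simp only [Finset.sum_mul, Finset.mul_sum, starRingEnd_apply, star_star]
    rw [Finset.sum_comm]
    refine Finset.sum_congr rfl fun j _ => Finset.sum_congr rfl fun k _ => ?_
    ring
  have hbound : ∀ i, ‖(C * X * Cᴴ) i i‖ ≤ ‖X‖ * ‖u i‖ ^ 2 := by
    intro i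
    rw [hdiag i]
    have h1 : (star (u i) ⬝ᵥ X *ᵥ (u i) : ℂ)
        = @inner ℂ _ _ (u i) ((EuclideanSpace.equiv (Fin n) ℂ).symm (X *ᵥ (u i))) := by
      simp [PiLp.inner_apply, dotProduct, RCLike.inner_apply, mul_comm]
    rw [h1]
    calc ‖(inner ℂ (u i) ((EuclideanSpace.equiv (Fin n) ℂ).symm (X *ᵥ (u i))) : ℂ)‖
        ≤ ‖u i‖ * ‖(EuclideanSpace.equiv (Fin n) ℂ).symm (X *ᵥ (u i))‖ := norm_inner_le_norm _ _
      _ ≤ ‖u i‖ * (‖X‖ * ‖u i‖) := by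
          gcongr; exact Matrix.l2_opNorm_mulVec X (u i)
      _ = ‖X‖ * ‖u i‖ ^ 2 := by ring
  have htr : (Cᴴ * C).trace.re = ∑ i, ‖u i‖ ^ 2 := by
    have hnorm : ∀ i, ‖u i‖ ^ 2 = ∑ k, Complex.normSq (C i k) := by
      intro i
      rw [EuclideanSpace.norm_eq, Real.sq_sqrt (Finset.sum_nonneg fun k _ => sq_nonneg _)]
      simp [hu, Complex.sq_norm, Complex.normSq_conj]
    simp only [hnorm, Matrix.trace, Matrix.diag, Matrix.mul_apply, Complex.re_sum,
      Matrix.conjTranspose_apply]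
    rw [Finset.sum_comm]
    congr 1; ext i; congr 1; ext k
    simp [Complex.normSq_eq_conj_mul_self, Complex.normSq_apply]
  calc ‖(C * X * Cᴴ).trace‖ ≤ ∑ i, ‖(C * X * Cᴴ) i i‖ :=
        norm_sum_le _ _
    _ ≤ ∑ i, ‖X‖ * ‖u i‖ ^ 2 := Finset.sum_le_sum fun i _ => hbound i
    _ = ‖X‖ * (Cᴴ * C).trace.re := by rw [htr, Finset.mul_sum]

set_option maxHeartbeats 1000000 in
/-- **Bohr's inequality for upper triangular matrices** (general `n`, radius `1/3`). -/
theorem bohr_matrix_upper_triangular {n : ℕ} (hn : 1 ≤ n)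
    (A S : Matrix (Fin n) (Fin n) ℂ)
    (hA_ut : ∀ i j : Fin n, j < i → A i j = 0)
    (hA_tr : 0 ≤ A.trace)
    (hS_herm : S.IsHermitian)
    (hS_ut : ∀ i j : Fin n, j < i → S i j = 0)
    (hAS : (S - (2 : ℂ)⁻¹ • (A + Aᴴ)).PosSemidef)
    (B : ℕ → Matrix (Fin n) (Fin n) ℂ)
    (hB_sut : ∀ m : ℕ, 1 ≤ m → ∀ i j : Fin n, j ≤ i → B m i j = 0)
    (hB_norm : ∀ m : ℕ, 1 ≤ m → ‖B m‖ ≤ 1)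
    (α : ℕ → ℂ)
    (hα0 : α 0 = A.trace)
    (hα : ∀ m : ℕ, 1 ≤ m → α m = (A * (B m)ᴴ).trace)
    (r : ℝ) (hr0 : 0 ≤ r) (hr1 : r ≤ 1 / 3) :
    Summable (fun m : ℕ => ‖α m‖ * r ^ m) ∧
      ∑' m : ℕ, ‖α m‖ * r ^ m ≤ S.trace.re := by
  set P : Matrix (Fin n) (Fin n) ℂ := S - (2 : ℂ)⁻¹ • (A + Aᴴ) with hPdef
  set a : ℝ := A.trace.re with ha
  have ha0 : 0 ≤ a := (Complex.le_def.mp hA_tr).1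
  have haim : A.trace.im = 0 := ((Complex.le_def.mp hA_tr).2).symm
  have hAtr : A.trace = (a : ℂ) := Complex.ext (by simp [ha]) (by simp [haim])
  set t : ℝ := P.trace.re with htdef
  have ht0 : 0 ≤ t := trace_re_nonneg_of_psd hAS
  have hPtr : a + t = S.trace.re := by
    have : P.trace = S.trace - (a : ℂ) := by
      rw [hPdef]
      rw [Matrix.trace_sub, Matrix.trace_smul, Matrix.trace_add, Matrix.trace_conjTranspose,
        hAtr]
      simp only [RCLike.star_def, Complex.conj_ofReal, smul_eq_mul]
      ring
    rw [htdef, this]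
    simp
  -- key bound
  have hkey : ∀ m : ℕ, 1 ≤ m → ‖α m‖ ≤ 2 * t := by
    intro m hm
    have htr2 : (A * (B m)ᴴ).trace = -2 * (P * (B m)ᴴ).trace := by
      simp only [Matrix.trace, Matrix.diag, Matrix.mul_apply, Matrix.conjTranspose_apply,
        ← Finset.mul_sum]
      rw [Finset.mul_sum]
      refine Finset.sum_congr rfl fun i _ => ?_
      rw [Finset.mul_sum]
      refine Finset.sum_congr rfl fun k _ => ?_
      rcases le_or_gt k i with hki | hik
      · rw [hB_sut m hm i k hki]; simp
      · have hAki : A k i = 0 := hA_ut k i hik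
        have hSki : S k i = 0 := hS_ut k i hik
        have hSik : S i k = 0 := by
          have := congrFun (congrFun hS_herm.eq i) k
          rw [Matrix.conjTranspose_apply, hSki] at this
          simpa using this.symm
        have hPik : P i k = -(2 : ℂ)⁻¹ * A i k := by
          simp [hPdef, hSik, Matrix.conjTranspose_apply, hAki]
        rw [hPik]
        ring
    have hαm : α m = -2 * (P * (B m)ᴴ).trace := by rw [hα m hm, htr2]
    rw [hαm]
    have h1 : ‖(P * (B m)ᴴ).trace‖ ≤ ‖(B m)ᴴ‖ * t :=
      trace_psd_mul_le hAS
    have h2 : ‖(B m)ᴴ‖ ≤ 1 := by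
      rw [Matrix.l2_opNorm_conjTranspose]; exact hB_norm m hm
    calc ‖(-2 * (P * (B m)ᴴ).trace)‖
        = 2 * ‖(P * (B m)ᴴ).trace‖ := by
          rw [norm_mul]; norm_num
      _ ≤ 2 * (‖(B m)ᴴ‖ * t) := by linarith
      _ ≤ 2 * (1 * t) := by
          have := mul_le_mul_of_nonneg_right h2 ht0
          linarith
      _ = 2 * t := by ring
  -- summability
  have hr1' : r < 1 := lt_of_le_of_lt hr1 (by norm_num)
  set C : ℝ := max a (2 * t) with hC
  have hf0 : ‖α 0‖ = a := by
    rw [hα0, hAtr, Complex.norm_real, Real.norm_eq_abs, abs_of_nonneg ha0]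
  have hfle : ∀ m : ℕ, ‖α m‖ * r ^ m ≤ C * r ^ m := by
    intro m
    refine mul_le_mul_of_nonneg_right ?_ (pow_nonneg hr0 m)
    rcases Nat.eq_zero_or_pos m with rfl | hm
    · rw [hf0]; exact le_max_left _ _
    · exact (hkey m hm).trans (le_max_right _ _)
  have hgeo : Summable fun m : ℕ => C * r ^ m :=
    (summable_geometric_of_lt_one hr0 hr1').mul_left C
  have hsf : Summable fun m : ℕ => ‖α m‖ * r ^ m :=
    Summable.of_nonneg_of_le
      (fun m => mul_nonneg (norm_nonneg _) (pow_nonneg hr0 m)) hfle hgeo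
  refine ⟨hsf, ?_⟩
  rw [hsf.tsum_eq_zero_add]
  have hhead : ‖α 0‖ * r ^ 0 = a := by rw [hf0]; simp
  have htail_le : (∑' m : ℕ, ‖α (m + 1)‖ * r ^ (m + 1))
      ≤ ∑' m : ℕ, (2 * t * r) * r ^ m := by
    refine Summable.tsum_le_tsum (fun m => ?_) ((summable_nat_add_iff 1).mpr hsf)
      ((summable_geometric_of_lt_one hr0 hr1').mul_left _)
    rw [pow_succ]
    calc ‖α (m + 1)‖ * (r ^ m * r) ≤ (2 * t) * (r ^ m * r) := by
          refine mul_le_mul_of_nonneg_right (hkey (m + 1) (by omega)) ?_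
          positivity
      _ = (2 * t * r) * r ^ m := by ring
  have htail : (∑' m : ℕ, (2 * t * r) * r ^ m) ≤ t := by
    rw [tsum_mul_left, tsum_geometric_of_lt_one hr0 hr1']
    have h1r : 0 < 1 - r := by linarith
    rw [inv_eq_one_div, mul_comm, div_mul_eq_mul_div, one_mul, div_le_iff₀ h1r]
    nlinarith [mul_nonneg ht0 hr0]
  calc ‖α 0‖ * r ^ 0 + ∑' m : ℕ, ‖α (m + 1)‖ * r ^ (m + 1)
      ≤ a + t := by
        rw [hhead]
        exact add_le_add_right (htail_le.trans htail) a
    _ = S.trace.re := hPtr
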